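/- Let X be a k×r real matrix (k ≤ r) with full row rank k and suppose every singular value σ_i(X) satisfies √(1−√ε) ≤ σ_i(X) ≤ √(1+√ε) for some 0 < ε < 1/3. Then ‖X⁺ − Xᵀ‖₂ ≤ √ε / √(1−√ε) ≤ 1.54 √ε. -/

import Mathlib

open Matrix

/-- Spectral norm (largest singular value) of a real matrix. -/
noncomputable def specNorm {m n : ℕ} (A : Matrix (Fin m) (Fin n) ℝ) : ℝ :=
  ‖LinearMap.toContinuousLinearMap (Matrix.toEuclideanLin A)‖

/-- `P` satisfies the four Penrose conditions for being the Moore–Penrose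
pseudoinverse of `A`. -/
def IsMoorePenrose {m n : ℕ} (A : Matrix (Fin m) (Fin n) ℝ)
    (P : Matrix (Fin n) (Fin m) ℝ) : Prop :=
  A * P * A = A ∧ P * A * P = P ∧ (A * P)ᵀ = A * P ∧ (P * A)ᵀ = P * A

/-- The `i`-th singular value of a `k × r` matrix (`k ≤ r`): the square root of the
`i`-th eigenvalue of `X Xᵀ`. -/
noncomputable def svalRow {k r : ℕ} (X : Matrix (Fin k) (Fin r) ℝ) (i : Fin k) : ℝ :=
  Real.sqrt ((Matrix.isHermitian_mul_conjTranspose_self X).eigenvalues i)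

/- ----------------- auxiliary lemmas ----------------- -/

lemma aux_pinv_eq {k r : ℕ} (X : Matrix (Fin k) (Fin r) ℝ) (P : Matrix (Fin r) (Fin k) ℝ)
    (h1 : X * P * X = X) (h2 : P * X * P = P)
    (h4 : (P * X)ᴴ = P * X) (hdet : IsUnit (X * Xᴴ).det) :
    P = Xᴴ * (X * Xᴴ)⁻¹ := by
  set A := X * Xᴴ with hA
  have hXP : X * P = 1 := by
    have e : (X * P) * A = A := by
      rw [hA, ← Matrix.mul_assoc, h1]
    calc X * P = (X * P) * A * A⁻¹ := by rw [Matrix.mul_nonsing_inv_cancel_right _ _ hdet]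
    _ = A * A⁻¹ := by rw [e]
    _ = 1 := Matrix.mul_nonsing_inv _ hdet
  have hsym : Xᴴ * Pᴴ = P * X := by rw [← conjTranspose_mul, h4]
  have hPtP : A * (Pᴴ * P) = 1 := by
    calc A * (Pᴴ * P) = X * (Xᴴ * Pᴴ) * P := by rw [hA]; simp only [Matrix.mul_assoc]
    _ = X * (P * X) * P := by rw [hsym]
    _ = (X * P) * (X * P) := by simp only [Matrix.mul_assoc]
    _ = 1 := by rw [hXP, one_mul]
  have hinv : A⁻¹ = Pᴴ * P := Matrix.inv_eq_right_inv hPtP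
  calc P = P * X * P := h2.symm
  _ = Xᴴ * Pᴴ * P := by rw [hsym]
  _ = Xᴴ * (Pᴴ * P) := by rw [Matrix.mul_assoc]
  _ = Xᴴ * A⁻¹ := by rw [hinv]

lemma aux_psd {k : ℕ} (A : Matrix (Fin k) (Fin k) ℝ) (hA : A.IsHermitian) (c : ℝ)
    (hpos : ∀ i, 0 < hA.eigenvalues i)
    (hb : ∀ i, 0 ≤ c ^ 2 + 2 - hA.eigenvalues i - (hA.eigenvalues i)⁻¹) :
    PosSemidef ((c ^ 2 + 2) • (1 : Matrix (Fin k) (Fin k) ℝ) - A - A⁻¹) := by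
  set U : Matrix (Fin k) (Fin k) ℝ := (hA.eigenvectorUnitary : Matrix (Fin k) (Fin k) ℝ) with hU
  set lam := hA.eigenvalues with hlam
  have hUU : star U * U = 1 := Unitary.coe_star_mul_self _
  have hUU' : U * star U = 1 := Unitary.coe_mul_star_self _
  have hspec : A = U * diagonal lam * star U := by
    have := hA.spectral_theorem
    simpa [hU] using this
  have hAinv : A⁻¹ = U * diagonal (fun i => (lam i)⁻¹) * star U := by
    apply Matrix.inv_eq_right_inv
    calc A * (U * diagonal (fun i => (lam i)⁻¹) * star U)
        = U * diagonal lam * (star U * U) * diagonal (fun i => (lam i)⁻¹) * star U := by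
          rw [hspec]; simp only [Matrix.mul_assoc]
      _ = U * (diagonal lam * diagonal (fun i => (lam i)⁻¹)) * star U := by
          rw [hUU]; simp only [Matrix.mul_one, Matrix.mul_assoc]
      _ = 1 := by
          rw [diagonal_mul_diagonal]
          have : (fun i => lam i * (lam i)⁻¹) = fun _ => (1:ℝ) := by
            funext i; exact mul_inv_cancel₀ (hpos i).ne'
          rw [this, diagonal_one, Matrix.mul_one, hUU']
  have key : (c ^ 2 + 2) • (1 : Matrix (Fin k) (Fin k) ℝ) - A - A⁻¹
      = U * diagonal (fun i => c ^ 2 + 2 - lam i - (lam i)⁻¹) * star U := by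
    have hd : diagonal (fun i => c ^ 2 + 2 - lam i - (lam i)⁻¹)
        = (c ^ 2 + 2) • (1 : Matrix (Fin k) (Fin k) ℝ) - diagonal lam - diagonal (fun i => (lam i)⁻¹) := by
      ext i j
      by_cases h : i = j <;> simp [diagonal, h, Matrix.one_apply, Matrix.smul_apply]
    rw [hd]
    simp only [Matrix.mul_sub, Matrix.sub_mul, Matrix.mul_smul, Matrix.smul_mul, Matrix.mul_one]
    rw [← hspec, ← hAinv, hUU']
  rw [key]
  have hPSD : PosSemidef (diagonal (fun i => c ^ 2 + 2 - lam i - (lam i)⁻¹)) :=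
    Matrix.PosSemidef.diagonal (fun i => hb i)
  have := hPSD.mul_mul_conjTranspose_same U
  simpa [Matrix.star_eq_conjTranspose] using this

lemma esp_norm_sq_eq_dot {m : ℕ} (x : EuclideanSpace ℝ (Fin m)) :
    ‖x‖ ^ 2 = dotProduct (WithLp.equiv 2 _ x) (WithLp.equiv 2 _ x) := by
  rw [← real_inner_self_eq_norm_sq, EuclideanSpace.inner_eq_star_dotProduct]
  simp

lemma specNorm_le_of_quad {r k : ℕ} (M : Matrix (Fin r) (Fin k) ℝ) (c : ℝ) (hc : 0 ≤ c)
    (h : ∀ v : Fin k → ℝ, dotProduct v ((Mᵀ * M) *ᵥ v) ≤ c ^ 2 * dotProduct v v) :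
    specNorm M ≤ c := by
  rw [specNorm]
  apply ContinuousLinearMap.opNorm_le_bound _ hc
  intro v
  have h1 : ‖(LinearMap.toContinuousLinearMap (toEuclideanLin M)) v‖ ^ 2 ≤ (c * ‖v‖) ^ 2 := by
    rw [esp_norm_sq_eq_dot]
    have he : WithLp.equiv 2 (Fin r → ℝ) ((LinearMap.toContinuousLinearMap (toEuclideanLin M)) v)
        = M *ᵥ (WithLp.equiv 2 (Fin k → ℝ) v) := by
      simp [toEuclideanLin_apply]
    rw [he]
    set w := WithLp.equiv 2 (Fin k → ℝ) v with hw
    have hd : dotProduct w w = ‖v‖ ^ 2 := (esp_norm_sq_eq_dot v).symm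
    have e1 : dotProduct (M *ᵥ w) (M *ᵥ w) = dotProduct w ((Mᵀ * M) *ᵥ w) := by
      conv_rhs => rw [← mulVec_mulVec, dotProduct_mulVec, vecMul_transpose]
    rw [e1]
    calc dotProduct w ((Mᵀ * M) *ᵥ w) ≤ c ^ 2 * dotProduct w w := h w
      _ = (c * ‖v‖) ^ 2 := by rw [hd]; ring
  have h2 := Real.sqrt_le_sqrt h1
  rwa [Real.sqrt_sq (norm_nonneg _), Real.sqrt_sq (mul_nonneg hc (norm_nonneg _))] at h2

/- ----------------- main theorem ----------------- -/

theorem pinv_sub_transpose_bound {k r : ℕ} (hkr : k ≤ r)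
    (X : Matrix (Fin k) (Fin r) ℝ) (ε : ℝ) (hε : 0 < ε) (hε' : ε < 1/3)
    (hrank : X.rank = k)
    (hσ : ∀ i, Real.sqrt (1 - Real.sqrt ε) ≤ svalRow X i ∧
               svalRow X i ≤ Real.sqrt (1 + Real.sqrt ε))
    (P : Matrix (Fin r) (Fin k) ℝ) (hP : IsMoorePenrose X P) :
    specNorm (P - Xᵀ) ≤ Real.sqrt ε / Real.sqrt (1 - Real.sqrt ε) ∧
    Real.sqrt ε / Real.sqrt (1 - Real.sqrt ε) ≤ 1.54 * Real.sqrt ε := by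
  obtain ⟨h1, h2, h3, h4⟩ := hP
  set s := Real.sqrt ε with hs
  have hs0 : 0 < s := Real.sqrt_pos.mpr hε
  have hs2 : s ^ 2 = ε := Real.sq_sqrt hε.le
  have hs574 : s < 0.5774 := by
    have : ε < 0.5774 ^ 2 := by norm_num; linarith
    calc s = Real.sqrt ε := hs
    _ < Real.sqrt (0.5774 ^ 2) := Real.sqrt_lt_sqrt hε.le this
    _ = 0.5774 := Real.sqrt_sq (by norm_num)
  have hs1 : 1 - s > 0 := by linarith
  set c := Real.sqrt ε / Real.sqrt (1 - s) with hc
  have hsqrt1s : 0 < Real.sqrt (1 - s) := Real.sqrt_pos.mpr hs1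
  have hc0 : 0 ≤ c := div_nonneg (Real.sqrt_nonneg _) (Real.sqrt_nonneg _)
  have hc2 : c ^ 2 = ε / (1 - s) := by
    rw [hc, div_pow, Real.sq_sqrt hε.le, Real.sq_sqrt hs1.le]
  -- matrix setup
  set A := X * Xᴴ with hA
  have hAH : A.IsHermitian := Matrix.isHermitian_mul_conjTranspose_self X
  set lam := hAH.eigenvalues with hlam
  have hlam_lb : ∀ i, 1 - s ≤ lam i := by
    intro i
    have hnn : 0 ≤ lam i := Matrix.eigenvalues_self_mul_conjTranspose_nonneg X i
    have h := (hσ i).1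
    have : (Real.sqrt (1 - s)) ^ 2 ≤ (Real.sqrt (lam i)) ^ 2 :=
      pow_le_pow_left₀ (Real.sqrt_nonneg _) h 2
    rwa [Real.sq_sqrt hs1.le, Real.sq_sqrt hnn] at this
  have hlam_ub : ∀ i, lam i ≤ 1 + s := by
    intro i
    have hnn : 0 ≤ lam i := Matrix.eigenvalues_self_mul_conjTranspose_nonneg X i
    have h := (hσ i).2
    have : (Real.sqrt (lam i)) ^ 2 ≤ (Real.sqrt (1 + s)) ^ 2 :=
      pow_le_pow_left₀ (Real.sqrt_nonneg _) h 2
    rwa [Real.sq_sqrt hnn, Real.sq_sqrt (by linarith : (0:ℝ) ≤ 1 + s)] at this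
  have hlam_pos : ∀ i, 0 < lam i := fun i => lt_of_lt_of_le hs1 (hlam_lb i)
  -- A invertible
  have hdet : IsUnit A.det := by
    have hd : A.det = ∏ i, lam i := by
      have := hAH.det_eq_prod_eigenvalues
      simpa using this
    rw [hd]
    exact isUnit_iff_ne_zero.mpr (ne_of_gt (Finset.prod_pos (fun i _ => hlam_pos i)))
  -- P = Xᴴ A⁻¹
  have h4' : (P * X)ᴴ = P * X := by
    rw [conjTranspose_eq_transpose_of_trivial, h4]
  have hPeq : P = Xᴴ * A⁻¹ := aux_pinv_eq X P h1 h2 h4' hdet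
  -- the matrix M
  have hct : Xᴴ = Xᵀ := conjTranspose_eq_transpose_of_trivial X
  set M := P - Xᵀ with hM
  -- Mᵀ * M = A + A⁻¹ - 2•1
  have hAsymm : Aᵀ = A := by rw [← conjTranspose_eq_transpose_of_trivial, hAH.eq]
  have hAinvT : (A⁻¹)ᵀ = A⁻¹ := by rw [transpose_nonsing_inv, hAsymm]
  have hMT : Mᵀ = A⁻¹ * X - X := by
    rw [hM, ← conjTranspose_eq_transpose_of_trivial (P - Xᵀ), hPeq, ← hct,
      conjTranspose_sub, conjTranspose_mul, conjTranspose_conjTranspose,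
      conjTranspose_nonsing_inv, hAH.eq]
  have hAiA : A⁻¹ * A = 1 := Matrix.nonsing_inv_mul _ hdet
  have hAAi : A * A⁻¹ = 1 := Matrix.mul_nonsing_inv _ hdet
  have hB : Mᵀ * M = A + A⁻¹ - (2:ℝ) • (1 : Matrix (Fin k) (Fin k) ℝ) := by
    have hMeq : M = Xᴴ * A⁻¹ - Xᴴ := by rw [hM, hPeq, ← hct]
    rw [hMT, hMeq]
    have hXXH : X * Xᴴ = A := hA.symm
    rw [Matrix.sub_mul, Matrix.mul_sub, Matrix.mul_sub]
    have t1 : A⁻¹ * X * (Xᴴ * A⁻¹) = A⁻¹ := by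
      rw [Matrix.mul_assoc, ← Matrix.mul_assoc X, hXXH, ← Matrix.mul_assoc, hAiA, Matrix.one_mul]
    have t2 : A⁻¹ * X * Xᴴ = 1 := by rw [Matrix.mul_assoc, hXXH, hAiA]
    have t3 : X * (Xᴴ * A⁻¹) = A * A⁻¹ := by rw [← Matrix.mul_assoc, hXXH]
    rw [t1, t2, t3, hAAi, hXXH, two_smul]
    abel
  -- eigenvalue inequality for the PSD certificate
  have hb : ∀ i, 0 ≤ c ^ 2 + 2 - lam i - (lam i)⁻¹ := by
    intro i
    have htpos := hlam_pos i
    have hlb := hlam_lb i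
    have hub := hlam_ub i
    have hc2' : c ^ 2 * (1 - s) = ε := by rw [hc2]; field_simp
    have hse : ε = s ^ 2 := hs2.symm
    have key : 0 ≤ c ^ 2 * lam i + 2 * lam i - (lam i) ^ 2 - 1 := by
      nlinarith [mul_nonneg (sq_nonneg c) (by linarith : (0:ℝ) ≤ lam i - (1 - s)),
        mul_nonneg (by linarith : (0:ℝ) ≤ 1 + s - lam i)
          (by linarith : (0:ℝ) ≤ lam i - (1 - s))]
    have expand : c ^ 2 + 2 - lam i - (lam i)⁻¹
        = (c ^ 2 * lam i + 2 * lam i - (lam i) ^ 2 - 1) * (lam i)⁻¹ := by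
      field_simp
    rw [expand]
    exact mul_nonneg key (inv_nonneg.mpr htpos.le)
  have hS : PosSemidef ((c ^ 2 + 2) • (1 : Matrix (Fin k) (Fin k) ℝ) - A - A⁻¹) :=
    aux_psd A hAH c hlam_pos hb
  have hS' : PosSemidef (c ^ 2 • (1 : Matrix (Fin k) (Fin k) ℝ) - Mᵀ * M) := by
    have e : (c ^ 2 + 2) • (1 : Matrix (Fin k) (Fin k) ℝ) - A - A⁻¹
        = c ^ 2 • (1 : Matrix (Fin k) (Fin k) ℝ) - Mᵀ * M := by
      rw [hB, add_smul, two_smul]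
      abel
    rwa [e] at hS
  have hquad : ∀ v : Fin k → ℝ, dotProduct v ((Mᵀ * M) *ᵥ v) ≤ c ^ 2 * dotProduct v v := by
    intro v
    have hv := hS'.dotProduct_mulVec_nonneg v
    rw [star_trivial] at hv
    rw [Matrix.sub_mulVec, Matrix.smul_mulVec, Matrix.one_mulVec,
      dotProduct_sub, dotProduct_smul, smul_eq_mul] at hv
    linarith
  constructor
  · exact specNorm_le_of_quad M c hc0 hquad
  · -- numeric part
    have h65 : (0.65 : ℝ) ≤ Real.sqrt (1 - s) := by
      have h1 : ((0.65 : ℝ)) = Real.sqrt (0.65 ^ 2) := (Real.sqrt_sq (by norm_num)).symm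
      rw [h1]
      apply Real.sqrt_le_sqrt
      norm_num
      linarith
    have hε0 : 0 ≤ Real.sqrt ε := Real.sqrt_nonneg _
    calc Real.sqrt ε / Real.sqrt (1 - s) ≤ Real.sqrt ε / 0.65 :=
          div_le_div_of_nonneg_left hε0 (by norm_num) h65
    _ = (1 / 0.65) * Real.sqrt ε := by ring
    _ ≤ 1.54 * Real.sqrt ε := mul_le_mul_of_nonneg_right (by norm_num) hε0
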